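/- Let p be an odd prime, n ≥ 1, k with 1 ≤ k ≤ n, and a, b, c nonnegative integers. Define S_{k,n}(a,b,c) as the coefficient of (x_1···x_n)^(p-1) in x_1···x_k · ∏_{1≤i<j≤n}(x_i-x_j)^{2c} ∏_{i=1}^n x_i^a(1-x_i)^b over F_p. If a + b + (2n-2)c < 2p - 2, then (a+b+(2n-k-1)c+2) · S_{k,n}(a,b,c) = (a+(n-k)c+1) · S_{k-1,n}(a,b,c) in F_p (Aomoto recursion over F_p). -/

import Mathlib

open MvPolynomial Finset

/-- The Selberg master polynomial `∏_{i<j}(x_i-x_j)^{2c} ∏_i x_i^a (1-x_i)^b` over `F_p`. -/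
noncomputable def selbergPoly (p n a b c : ℕ) : MvPolynomial (Fin n) (ZMod p) :=
  (∏ i : Fin n, ∏ j ∈ Finset.univ.filter (fun j => i < j), (X i - X j) ^ (2 * c)) *
    ∏ i : Fin n, X i ^ a * (1 - X i) ^ b

/-- The `F_p`-Selberg integral `S_n(a,b,c)`: the coefficient of
`x_1^(p-1) ⋯ x_n^(p-1)` in the Selberg master polynomial. -/
noncomputable def selbergInt (p n a b c : ℕ) : ZMod p :=
  MvPolynomial.coeff (Finsupp.equivFunOnFinite.symm fun _ : Fin n => p - 1)
    (selbergPoly p n a b c)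

/-- `S_{k,n}(a,b,c)`: the coefficient of `x_1^(p-1) ⋯ x_n^(p-1)` in
`x_1 ⋯ x_k ∏_{i<j}(x_i-x_j)^{2c} ∏_i x_i^a (1-x_i)^b`. -/
noncomputable def selbergIntK (p n k a b c : ℕ) : ZMod p :=
  MvPolynomial.coeff (Finsupp.equivFunOnFinite.symm fun _ : Fin n => p - 1)
    ((∏ i ∈ Finset.univ.filter (fun i : Fin n => (i : ℕ) < k), X i) * selbergPoly p n a b c)

namespace FpAomoto

variable (p n : ℕ)

/-- target exponent -/
noncomputable def mexp : Fin n →₀ ℕ := Finsupp.equivFunOnFinite.symm fun _ => p - 1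

/-- the F_p integral: coefficient extraction -/
noncomputable def integ (f : MvPolynomial (Fin n) (ZMod p)) : ZMod p := coeff (mexp p n) f

variable {p n}

lemma mexp_apply (i : Fin n) : mexp p n i = p - 1 := rfl

lemma integ_add (f g) : integ p n (f + g) = integ p n f + integ p n g := coeff_add _ _ _
lemma integ_sub (f g) : integ p n (f - g) = integ p n f - integ p n g := by simp [integ]
lemma integ_neg (f) : integ p n (-f) = - integ p n f := by simp [integ]
lemma integ_natCast_mul (m : ℕ) (f) : integ p n ((m : MvPolynomial (Fin n) (ZMod p)) * f) = (m : ZMod p) * integ p n f := by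
  rw [← MvPolynomial.C_eq_coe_nat, integ, coeff_C_mul]; rfl
lemma integ_sum {ι : Type*} (s : Finset ι) (f : ι → MvPolynomial (Fin n) (ZMod p)) :
    integ p n (∑ j ∈ s, f j) = ∑ j ∈ s, integ p n (f j) := by
  classical
  induction s using Finset.induction_on with
  | empty => simp [integ, mexp]
  | @insert _ _ h ih => rw [Finset.sum_insert h, integ_add, ih, Finset.sum_insert h]

lemma integ_pderiv [Fact p.Prime] (i : Fin n) (f : MvPolynomial (Fin n) (ZMod p)) :
    integ p n (pderiv i f) = 0 := by
  have hp2 := (Fact.out : p.Prime).two_le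
  conv_lhs => rw [f.as_sum, map_sum, integ_sum]
  apply Finset.sum_eq_zero
  intro s _
  rw [pderiv_monomial, integ, coeff_monomial]
  split_ifs with h
  · by_cases h0 : s i = 0
    · exfalso
      have h1 := congrArg (fun g => g i) h
      simp only [Finsupp.tsub_apply, Finsupp.single_eq_same, mexp,
        Finsupp.equivFunOnFinite_symm_apply_apply] at h1
      omega
    · have h1 := congrArg (fun g => g i) h
      simp only [Finsupp.tsub_apply, Finsupp.single_eq_same, mexp,
        Finsupp.equivFunOnFinite_symm_apply_apply] at h1
      have : s i = p := by omega
      simp [this]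
  · rfl

lemma pderiv_finset_prod {ι : Type*} [DecidableEq ι] (i : Fin n) (s : Finset ι)
    (f : ι → MvPolynomial (Fin n) (ZMod p)) :
    pderiv i (∏ j ∈ s, f j) = ∑ j ∈ s, pderiv i (f j) * ∏ l ∈ s.erase j, f l := by
  induction s using Finset.induction_on with
  | empty => simp
  | @insert a s ha ih =>
    rw [Finset.prod_insert ha, pderiv_mul, ih, Finset.sum_insert ha, Finset.erase_insert ha,
      Finset.mul_sum]
    congr 1
    apply Finset.sum_congr rfl
    intro j hj
    have hja : j ≠ a := fun hja => ha (hja ▸ hj)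
    rw [Finset.erase_insert_of_ne hja.symm,
      Finset.prod_insert (fun hmem => ha (Finset.mem_of_mem_erase hmem))]
    ring

lemma pderiv_finset_prod_zero {ι : Type*} [DecidableEq ι] (i : Fin n) (s : Finset ι)
    (f : ι → MvPolynomial (Fin n) (ZMod p)) (h : ∀ j ∈ s, pderiv i (f j) = 0) :
    pderiv i (∏ j ∈ s, f j) = 0 := by
  rw [pderiv_finset_prod]
  exact Finset.sum_eq_zero fun j hj => by rw [h j hj, zero_mul]

/-- The integral is invariant under renaming by a permutation. -/
lemma integ_rename (e : Equiv.Perm (Fin n)) (f : MvPolynomial (Fin n) (ZMod p)) :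
    integ p n (rename e f) = integ p n f := by
  have hm : mexp p n = Finsupp.mapDomain e (mexp p n) := by
    ext x
    rw [show x = e (e.symm x) by simp, Finsupp.mapDomain_equiv_apply]
    simp [mexp_apply]
  unfold integ
  conv_lhs => rw [hm]
  exact coeff_rename_mapDomain _ e.injective f _


variable (p n) (c : ℕ)

noncomputable def pairs : Finset (Fin n × Fin n) := Finset.univ.filter fun q => q.1 < q.2

noncomputable def fSq (q : Fin n × Fin n) : MvPolynomial (Fin n) (ZMod p) :=
  (X q.1 - X q.2) ^ (2 * c)

noncomputable def Apoly : MvPolynomial (Fin n) (ZMod p) := ∏ q ∈ pairs n, fSq p n c q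

variable {p n c}

lemma fSq_symm (i j : Fin n) : fSq p n c (i, j) = fSq p n c (j, i) := by
  unfold fSq
  rw [show (X j - X i : MvPolynomial (Fin n) (ZMod p)) = -(X i - X j) by ring,
    Even.neg_pow (even_two_mul c)]

lemma mem_pairs {q : Fin n × Fin n} : q ∈ pairs n ↔ q.1 < q.2 := by
  simp [pairs]

lemma rename_fSq (e : Equiv.Perm (Fin n)) (q : Fin n × Fin n) :
    rename (⇑e) (fSq p n c q) = fSq p n c (e q.1, e q.2) := by
  simp [fSq]

/-- The pair product is invariant under every permutation of the variables. -/
lemma rename_Apoly (e : Equiv.Perm (Fin n)) : rename (⇑e) (Apoly p n c) = Apoly p n c := by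
  unfold Apoly
  rw [map_prod]
  simp_rw [rename_fSq]
  apply Finset.prod_nbij'
    (i := fun q => if e q.1 < e q.2 then (e q.1, e q.2) else (e q.2, e q.1))
    (j := fun q => if e.symm q.1 < e.symm q.2 then (e.symm q.1, e.symm q.2)
      else (e.symm q.2, e.symm q.1))
  · intro q hq
    rw [mem_pairs] at hq
    have hne : e q.1 ≠ e q.2 := fun h => absurd (e.injective h) (ne_of_lt hq)
    rcases lt_or_gt_of_ne hne with h | h
    · rw [mem_pairs, if_pos h]; exact h
    · rw [mem_pairs, if_neg (asymm h)]; exact h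
  · intro q hq
    rw [mem_pairs] at hq
    have hne : e.symm q.1 ≠ e.symm q.2 := fun h => absurd (e.symm.injective h) (ne_of_lt hq)
    rcases lt_or_gt_of_ne hne with h | h
    · rw [mem_pairs, if_pos h]; exact h
    · rw [mem_pairs, if_neg (asymm h)]; exact h
  · intro q hq
    rw [mem_pairs] at hq
    have hne : e q.1 ≠ e q.2 := fun h => absurd (e.injective h) (ne_of_lt hq)
    rcases lt_or_gt_of_ne hne with h | h
    · simp only [if_pos h, Equiv.symm_apply_apply, if_pos hq]
    · simp only [if_neg (asymm h), Equiv.symm_apply_apply, if_neg (asymm hq)]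
  · intro q hq
    rw [mem_pairs] at hq
    have hne : e.symm q.1 ≠ e.symm q.2 := fun h => absurd (e.symm.injective h) (ne_of_lt hq)
    rcases lt_or_gt_of_ne hne with h | h
    · simp only [if_pos h, Equiv.apply_symm_apply, if_pos hq]
    · simp only [if_neg (asymm h), Equiv.apply_symm_apply, if_neg (asymm hq)]
  · intro q hq
    split_ifs with hlt
    · rfl
    · exact fSq_symm _ _

/-- ordered pair -/
noncomputable def opair (i j : Fin n) : Fin n × Fin n := if i < j then (i, j) else (j, i)

noncomputable def Ahat (p c : ℕ) (i j : Fin n) : MvPolynomial (Fin n) (ZMod p) :=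
  ∏ q ∈ (pairs n).erase (opair i j), fSq p n c q

lemma opair_mem_pairs {i j : Fin n} (h : i ≠ j) : opair i j ∈ pairs n := by
  rw [opair]
  rcases lt_or_gt_of_ne h with hlt | hlt
  · rw [if_pos hlt, mem_pairs]; exact hlt
  · rw [if_neg (asymm hlt), mem_pairs]; exact hlt

lemma fSq_opair {i j : Fin n} : fSq p n c (opair i j) = (X i - X j) ^ (2 * c) := by
  rw [opair]
  split_ifs with hlt
  · rfl
  · rw [show ((j, i) : Fin n × Fin n) = ((j, i).1, (j, i).2) from rfl, fSq_symm]; rfl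

lemma fSq_opair_mul_Ahat {i j : Fin n} (h : i ≠ j) :
    (X i - X j) ^ (2 * c) * Ahat p c i j = Apoly p n c := by
  rw [← fSq_opair, Ahat, Apoly, Finset.mul_prod_erase _ _ (opair_mem_pairs h)]

lemma X_sub_X_ne_zero [Fact p.Prime] {i j : Fin n} (h : i ≠ j) :
    (X i - X j : MvPolynomial (Fin n) (ZMod p)) ≠ 0 := by
  rw [sub_ne_zero]
  exact fun heq => h (MvPolynomial.X_injective heq)

lemma rename_swap_Ahat [Fact p.Prime] {i j : Fin n} (h : i ≠ j) :
    rename (⇑(Equiv.swap i j)) (Ahat p c i j) = Ahat p c i j := by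
  have hA := rename_Apoly (p := p) (c := c) (Equiv.swap i j)
  rw [← fSq_opair_mul_Ahat h, map_mul] at hA
  have hfs : rename (⇑(Equiv.swap i j)) ((X i - X j : MvPolynomial (Fin n) (ZMod p)) ^ (2 * c))
      = (X i - X j) ^ (2 * c) := by
    rw [map_pow, map_sub, rename_X, rename_X, Equiv.swap_apply_left, Equiv.swap_apply_right,
      show (X j - X i : MvPolynomial (Fin n) (ZMod p)) = -(X i - X j) by ring,
      Even.neg_pow (even_two_mul c)]
  rw [hfs] at hA
  exact mul_left_cancel₀ (pow_ne_zero _ (X_sub_X_ne_zero h)) hA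

/-- Derivative of the pair product. -/
lemma pderiv_Apoly [Fact p.Prime] (i0 : Fin n) :
    pderiv i0 (Apoly p n c) = ∑ j ∈ Finset.univ.erase i0,
      (2 * c : MvPolynomial (Fin n) (ZMod p)) * (X i0 - X j) ^ (2 * c - 1) * Ahat p c i0 j := by
  rw [Apoly, pderiv_finset_prod]
  rw [← Finset.sum_filter_of_ne (p := fun q : Fin n × Fin n => q.1 = i0 ∨ q.2 = i0)]
  · apply Finset.sum_nbij' (i := fun q => if q.1 = i0 then q.2 else q.1)
      (j := fun j => opair i0 j)
    · intro q hq
      simp only [Finset.mem_filter, mem_pairs] at hq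
      obtain ⟨hq1, hq2⟩ := hq
      rcases hq2 with h1 | h2
      · rw [if_pos h1, Finset.mem_erase]
        exact ⟨fun he => absurd (h1 ▸ he ▸ hq1) (lt_irrefl _), Finset.mem_univ _⟩
      · have hne : q.1 ≠ i0 := fun he => absurd (he ▸ h2 ▸ hq1) (lt_irrefl _)
        rw [if_neg hne, Finset.mem_erase]
        exact ⟨hne, Finset.mem_univ _⟩
    · intro j hj
      rw [Finset.mem_erase] at hj
      rw [Finset.mem_filter]
      refine ⟨opair_mem_pairs (Ne.symm hj.1), ?_⟩
      rw [opair]; split_ifs with hlt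
      · exact Or.inl rfl
      · exact Or.inr rfl
    · intro q hq
      simp only [Finset.mem_filter, mem_pairs] at hq
      obtain ⟨hq1, hq2⟩ := hq
      rcases hq2 with h1 | h2
      · rw [if_pos h1, opair, if_pos (h1 ▸ hq1)]
        exact Prod.ext h1.symm rfl
      · have hne : q.1 ≠ i0 := fun he => absurd (he ▸ h2 ▸ hq1) (lt_irrefl _)
        rw [if_neg hne, opair, if_neg (not_lt.mpr (le_of_lt (h2 ▸ hq1)))]
        exact Prod.ext rfl h2.symm
    · intro j hj
      rw [Finset.mem_erase] at hj
      rw [opair]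
      rcases lt_or_gt_of_ne (Ne.symm hj.1) with hlt | hlt
      · rw [if_pos hlt, if_pos rfl]
      · rw [if_neg (asymm hlt), if_neg hj.1]
    · intro q hq
      simp only [Finset.mem_filter, mem_pairs] at hq
      obtain ⟨hq1, hq2⟩ := hq
      rcases hq2 with h1 | h2
      · rw [if_pos h1]
        have hop : opair i0 q.2 = q := by
          rw [opair, if_pos (h1 ▸ hq1)]; exact Prod.ext h1.symm rfl
        rw [show fSq p n c q = (X q.1 - X q.2) ^ (2*c) from rfl, pderiv_pow, map_sub, h1,
          pderiv_X_self, pderiv_X_of_ne (fun he : q.2 = i0 => absurd (he ▸ h1 ▸ hq1) (lt_irrefl _)),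
          Ahat, hop]
        push_cast
        ring
      · have hne : q.1 ≠ i0 := fun he => absurd (he ▸ h2 ▸ hq1) (lt_irrefl _)
        have hop : opair i0 q.1 = q := by
          rw [opair, if_neg (not_lt.mpr (le_of_lt (h2 ▸ hq1)))]
          exact Prod.ext rfl h2.symm
        rw [if_neg hne]
        rw [show fSq p n c q = (X q.1 - X q.2) ^ (2*c) from rfl, pderiv_pow, map_sub,
          pderiv_X_of_ne hne, h2, pderiv_X_self, Ahat, hop]
        -- goal: ↑(2c) * (X q.1 - X i0)^(2c-1) * (0 - 1) * ∏ ... = ↑(2c) * (X i0 - X q.1)^(2c-1) * ∏ ...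
        cases c with
        | zero => simp
        | succ c' =>
          rw [show (X q.1 - X i0 : MvPolynomial (Fin n) (ZMod p)) = -(X i0 - X q.1) by ring,
            Odd.neg_pow (⟨c', by omega⟩ : Odd (2 * (c' + 1) - 1))]
          push_cast
          ring
  · intro q hq heq
    by_contra hc
    push_neg at hc
    apply heq
    rw [show fSq p n c q = (X q.1 - X q.2) ^ (2*c) from rfl, pderiv_pow, map_sub,
      pderiv_X_of_ne hc.1, pderiv_X_of_ne hc.2]
    ring


noncomputable def Bpoly (p n a b : ℕ) : MvPolynomial (Fin n) (ZMod p) :=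
  ∏ i : Fin n, X i ^ a * (1 - X i) ^ b

lemma rename_Bpoly {a b : ℕ} (e : Equiv.Perm (Fin n)) :
    rename (⇑e) (Bpoly p n a b) = Bpoly p n a b := by
  unfold Bpoly
  rw [map_prod]
  simp only [map_mul, map_pow, map_sub, map_one, rename_X]
  exact Equiv.prod_comp e fun i => (X i : MvPolynomial (Fin n) (ZMod p)) ^ a * (1 - X i) ^ b

lemma rename_prod_X (e : Equiv.Perm (Fin n)) (s : Finset (Fin n)) (h : ∀ i ∈ s, e i = i) :
    rename (⇑e) (∏ i ∈ s, (X i : MvPolynomial (Fin n) (ZMod p))) = ∏ i ∈ s, X i := by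
  rw [map_prod]
  simp only [rename_X]
  exact Finset.prod_congr rfl fun i hi => by rw [h i hi]

/-- scalar identity for the case `j` outside the `x_1 ⋯ x_{k-1}` block -/
lemma sc1 {A : Type*} [CommRing A] (c : ℕ) (x y : A) :
    (2*c : ℕ) * ((x - x^2) * (x - y)^(2*c-1)) + (2*c : ℕ) * ((y - y^2) * (y - x)^(2*c-1))
      = (2*c : ℕ) * ((1 - x - y) * (x - y)^(2*c)) := by
  cases c with
  | zero => push_cast; ring
  | succ c' =>
    rw [show 2*(c'+1)-1 = 2*c'+1 by omega, show (y - x) = -(x-y) by ring,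
      Odd.neg_pow ⟨c', by omega⟩, show 2*(c'+1) = (2*c'+1)+1 by omega]
    push_cast
    ring

/-- scalar identity for the case `j` inside the `x_1 ⋯ x_{k-1}` block -/
lemma sc2 {A : Type*} [CommRing A] (c : ℕ) (x y : A) :
    (2*c : ℕ) * ((x - x^2) * (x - y)^(2*c-1) * y) + (2*c : ℕ) * ((y - y^2) * (y - x)^(2*c-1) * x)
      = (2*c : ℕ) * (-(x*y) * (x - y)^(2*c)) := by
  cases c with
  | zero => push_cast; ring
  | succ c' =>
    rw [show 2*(c'+1)-1 = 2*c'+1 by omega, show (y - x) = -(x-y) by ring,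
      Odd.neg_pow ⟨c', by omega⟩, show 2*(c'+1) = (2*c'+1)+1 by omega]
    push_cast
    ring

lemma pderiv_local (i : Fin n) (a b : ℕ) :
    (X i - X i^2) * pderiv i ((X i : MvPolynomial (Fin n) (ZMod p))^a * (1 - X i)^b)
      = ((a : MvPolynomial (Fin n) (ZMod p)) * (1 - X i) - (b : MvPolynomial (Fin n) (ZMod p)) * X i)
        * (X i^a * (1 - X i)^b) := by
  rw [pderiv_mul, pderiv_pow, pderiv_pow, pderiv_X_self, map_sub, pderiv_one, pderiv_X_self]
  cases a with
  | zero => cases b with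
    | zero => push_cast; ring
    | succ b' =>
      rw [show b'+1-1 = b' by omega, show b'+1 = b'+1 from rfl]
      push_cast; ring
  | succ a' => cases b with
    | zero =>
      rw [show a'+1-1 = a' by omega]
      push_cast; ring
    | succ b' =>
      rw [show a'+1-1 = a' by omega, show b'+1-1 = b' by omega]
      push_cast; ring

lemma pderiv_Bpoly (i0 : Fin n) (a b : ℕ) :
    (X i0 - X i0^2) * pderiv i0 (Bpoly p n a b)
      = ((a : MvPolynomial (Fin n) (ZMod p)) * (1 - X i0) - (b : MvPolynomial (Fin n) (ZMod p)) * X i0)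
        * Bpoly p n a b := by
  have hdec : Bpoly p n a b = (X i0 ^ a * (1 - X i0) ^ b) *
      ∏ i ∈ Finset.univ.erase i0, (X i : MvPolynomial (Fin n) (ZMod p)) ^ a * (1 - X i) ^ b :=
    (Finset.mul_prod_erase _ _ (Finset.mem_univ i0)).symm
  have hrest : pderiv i0 (∏ i ∈ Finset.univ.erase i0,
      (X i : MvPolynomial (Fin n) (ZMod p)) ^ a * (1 - X i) ^ b) = 0 := by
    apply pderiv_finset_prod_zero
    intro l hl
    have hli : l ≠ i0 := (Finset.mem_erase.mp hl).1
    rw [pderiv_mul, pderiv_pow, pderiv_pow, pderiv_X_of_ne hli, map_sub, pderiv_one,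
      pderiv_X_of_ne hli]
    ring
  conv_lhs => rw [hdec]
  rw [pderiv_mul, hrest, mul_zero, add_zero, show (X i0 - X i0^2) *
      (pderiv i0 ((X i0 : MvPolynomial (Fin n) (ZMod p))^a * (1 - X i0)^b) * ∏ i ∈ Finset.univ.erase i0,
      (X i : MvPolynomial (Fin n) (ZMod p)) ^ a * (1 - X i) ^ b) =
      ((X i0 - X i0^2) * pderiv i0 ((X i0 : MvPolynomial (Fin n) (ZMod p))^a * (1 - X i0)^b)) *
      ∏ i ∈ Finset.univ.erase i0, (X i : MvPolynomial (Fin n) (ZMod p)) ^ a * (1 - X i) ^ b by ring,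
    pderiv_local, hdec]
  ring


lemma selbergPoly_eq (a b : ℕ) : selbergPoly p n a b c = Apoly p n c * Bpoly p n a b := by
  unfold selbergPoly Apoly Bpoly
  congr 1
  rw [pairs, Finset.prod_filter, ← Finset.univ_product_univ, Finset.prod_product]
  exact Finset.prod_congr rfl fun i _ => by rw [Finset.prod_filter]; rfl

end FpAomoto

open FpAomoto in
/-- The Aomoto recursion over `F_p`. -/
theorem Fp_aomoto_recursion (p n k a b c : ℕ) [Fact p.Prime] (hodd : p ≠ 2)
    (hn : 1 ≤ n) (hk1 : 1 ≤ k) (hkn : k ≤ n)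
    (h : a + b + (2 * n - 2) * c < 2 * p - 2) :
    ((a + b + (2 * n - k - 1) * c + 2 : ℕ) : ZMod p) * selbergIntK p n k a b c =
      ((a + (n - k) * c + 1 : ℕ) : ZMod p) * selbergIntK p n (k - 1) a b c := by
  classical
  have hp : p.Prime := Fact.out
  have h2ne : (2 : ZMod p) ≠ 0 := by
    intro h2
    have h2' : ((2:ℕ) : ZMod p) = 0 := by exact_mod_cast h2
    rw [ZMod.natCast_eq_zero_iff] at h2'
    exact hodd ((Nat.prime_dvd_prime_iff_eq hp Nat.prime_two).mp h2')
  set i0 : Fin n := ⟨k-1, by omega⟩ with hi0def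
  have hi0val : (i0 : ℕ) = k - 1 := rfl
  set A := Apoly p n c with hA
  set B := Bpoly p n a b with hB
  set Eset : Finset (Fin n) := (Finset.univ.filter fun i : Fin n => (i:ℕ) < k).erase i0 with hEsetdef
  set E' : MvPolynomial (Fin n) (ZMod p) := ∏ i ∈ Eset, X i with hE'def
  have hi0mem : i0 ∈ Finset.univ.filter fun i : Fin n => (i:ℕ) < k := by
    rw [Finset.mem_filter]
    exact ⟨Finset.mem_univ _, by omega⟩
  have hEk : (∏ i ∈ Finset.univ.filter fun i : Fin n => (i:ℕ) < k,
      (X i : MvPolynomial (Fin n) (ZMod p))) = X i0 * E' :=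
    (Finset.mul_prod_erase _ _ hi0mem).symm
  have hEk1 : (Finset.univ.filter fun i : Fin n => (i:ℕ) < k - 1) = Eset := by
    ext x
    rw [hEsetdef, Finset.mem_erase, Finset.mem_filter, Finset.mem_filter]
    constructor
    · intro hx
      refine ⟨fun hxe => ?_, Finset.mem_univ _, by omega⟩
      rw [hxe] at hx
      omega
    · intro hx
      have hxv : (x:ℕ) ≠ k - 1 := fun hv => hx.1 (Fin.ext (hv.trans hi0val.symm))
      exact ⟨Finset.mem_univ _, by omega⟩
  have hSk : selbergIntK p n k a b c = integ p n ((X i0 * E') * (A * B)) := by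
    unfold selbergIntK integ mexp
    rw [hEk, selbergPoly_eq]
  have hSk' : selbergIntK p n (k-1) a b c = integ p n (E' * (A * B)) := by
    unfold selbergIntK integ mexp
    rw [hEk1, selbergPoly_eq]
  set Sk := integ p n ((X i0 * E') * (A * B)) with hSkdef
  set Sk' := integ p n (E' * (A * B)) with hSk'def
  rw [hSk, hSk']
  -- the T polynomials
  set T : Fin n → MvPolynomial (Fin n) (ZMod p) := fun j =>
    ((2*c : ℕ) : MvPolynomial (Fin n) (ZMod p)) *
      ((X i0 - X i0^2) * (X i0 - X j)^(2*c-1) * (Ahat p c i0 j * (E' * B))) with hTdef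
  have hTapp : ∀ j : Fin n, T j = ((2*c : ℕ) : MvPolynomial (Fin n) (ZMod p)) *
      ((X i0 - X i0^2) * (X i0 - X j)^(2*c-1) * (Ahat p c i0 j * (E' * B))) := fun j => rfl
  -- derivative expansion
  have hE'0 : pderiv i0 E' = 0 := by
    apply pderiv_finset_prod_zero
    intro l hl
    exact pderiv_X_of_ne (Finset.mem_erase.mp hl).1
  have hD : pderiv i0 ((X i0 - X i0^2) * (E' * (A * B))) =
      (1 - 2*X i0) * (E' * (A*B))
      + (X i0 - X i0^2) * (E' * B * pderiv i0 A)
      + (X i0 - X i0^2) * (E' * A * pderiv i0 B) := by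
    rw [pderiv_mul, pderiv_mul, pderiv_mul, hE'0, map_sub, pderiv_X_self, pderiv_pow,
      pderiv_X_self]
    ring
  have hI0 : (0:ZMod p) = integ p n ((1 - 2*X i0) * (E' * (A*B)))
      + integ p n ((X i0 - X i0^2) * (E' * B * pderiv i0 A))
      + integ p n ((X i0 - X i0^2) * (E' * A * pderiv i0 B)) := by
    rw [← integ_add, ← integ_add, ← hD]
    exact (integ_pderiv i0 _).symm
  -- terms 1 and 3
  have hcomb : integ p n ((1 - 2*X i0) * (E' * (A*B)))
      + integ p n ((X i0 - X i0^2) * (E' * A * pderiv i0 B))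
      = ((1+a : ℕ) : ZMod p) * Sk' - ((2+a+b : ℕ) : ZMod p) * Sk := by
    rw [← integ_add]
    have hpoly : (1 - 2*X i0) * (E' * (A*B)) + (X i0 - X i0^2) * (E' * A * pderiv i0 B)
        = ((1+a : ℕ) : MvPolynomial (Fin n) (ZMod p)) * (E' * (A*B))
          - ((2+a+b : ℕ) : MvPolynomial (Fin n) (ZMod p)) * ((X i0 * E') * (A*B)) := by
      have hb := pderiv_Bpoly (p := p) (n := n) i0 a b
      rw [← hB] at hb
      push_cast
      linear_combination (E' * A) * hb
    rw [hpoly, integ_sub, integ_natCast_mul, integ_natCast_mul, hSkdef, hSk'def]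
  -- term 2 as a sum
  have hA2 : integ p n ((X i0 - X i0^2) * (E' * B * pderiv i0 A))
      = ∑ j ∈ Finset.univ.erase i0, integ p n (T j) := by
    rw [← integ_sum]
    congr 1
    rw [hA, pderiv_Apoly, Finset.mul_sum, Finset.mul_sum]
    refine Finset.sum_congr rfl fun j hj => ?_
    rw [hTapp]
    push_cast
    ring
  -- the per-j computation
  have hjval : ∀ j : Fin n, j ≠ i0 → ¬ ((j:ℕ) < k - 1) → k ≤ (j:ℕ) := by
    intro j hji0 hjk
    have : (j:ℕ) ≠ k - 1 := fun hv => hji0 (Fin.ext (hv.trans hi0val.symm))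
    omega
  have hTj : ∀ j ∈ Finset.univ.erase i0, 2 * integ p n (T j) =
      if (j:ℕ) < k - 1 then -(2*(c:ZMod p) * Sk) else 2*(c:ZMod p) * (Sk' - 2*Sk) := by
    intro j hj
    have hji0 : j ≠ i0 := (Finset.mem_erase.mp hj).1
    have hi0j : i0 ≠ j := hji0.symm
    have hσi0 : Equiv.swap i0 j i0 = j := Equiv.swap_apply_left _ _
    have hσj : Equiv.swap i0 j j = i0 := Equiv.swap_apply_right _ _
    have hren : integ p n (rename (⇑(Equiv.swap i0 j)) (T j)) = integ p n (T j) :=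
      integ_rename _ _
    have hAh : rename (⇑(Equiv.swap i0 j)) (Ahat p c i0 j) = Ahat p c i0 j :=
      rename_swap_Ahat hi0j
    have hBr : rename (⇑(Equiv.swap i0 j)) B = B := rename_Bpoly _
    have hAr : rename (⇑(Equiv.swap i0 j)) A = A := rename_Apoly _
    have hfq : (X i0 - X j)^(2*c) * Ahat p c i0 j = A := fSq_opair_mul_Ahat hi0j
    by_cases hjk : (j:ℕ) < k - 1
    · -- j inside the block x_1 ⋯ x_{k-1}
      have hjE : j ∈ Eset := by
        rw [hEsetdef, Finset.mem_erase, Finset.mem_filter]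
        exact ⟨hji0, Finset.mem_univ _, by omega⟩
      have hE'd : E' = X j * ∏ i ∈ Eset.erase j, (X i : MvPolynomial (Fin n) (ZMod p)) :=
        (Finset.mul_prod_erase _ _ hjE).symm
      have hE''r : rename (⇑(Equiv.swap i0 j))
          (∏ i ∈ Eset.erase j, (X i : MvPolynomial (Fin n) (ZMod p)))
          = ∏ i ∈ Eset.erase j, (X i : MvPolynomial (Fin n) (ZMod p)) := by
        apply rename_prod_X
        intro l hl
        have hl1 : l ≠ j := (Finset.mem_erase.mp hl).1
        have hl2 : l ≠ i0 := (Finset.mem_erase.mp (Finset.mem_of_mem_erase hl)).1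
        exact Equiv.swap_apply_of_ne_of_ne hl2 hl1
      have hrenT : rename (⇑(Equiv.swap i0 j)) (T j)
          = ((2*c : ℕ) : MvPolynomial (Fin n) (ZMod p)) *
            ((X j - X j^2) * (X j - X i0)^(2*c-1) *
              (Ahat p c i0 j * ((X i0 * ∏ i ∈ Eset.erase j, (X i : MvPolynomial (Fin n) (ZMod p))) * B))) := by
        rw [hTapp, hE'd]
        simp only [map_mul, map_sub, map_pow, map_natCast, map_one, rename_X, hσi0, hσj,
          hAh, hBr, hE''r]
      have h2T : 2 * integ p n (T j) = integ p n (T j + rename (⇑(Equiv.swap i0 j)) (T j)) := by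
        rw [integ_add, hren]
        ring
      have hpoly : T j + rename (⇑(Equiv.swap i0 j)) (T j)
          = -(((2*c : ℕ) : MvPolynomial (Fin n) (ZMod p)) * ((X i0 * E') * (A * B))) := by
        rw [hrenT, hTapp, hE'd, ← hfq]
        linear_combination (Ahat p c i0 j * ((∏ i ∈ Eset.erase j, (X i : MvPolynomial (Fin n) (ZMod p))) * B)) *
          sc2 c (X i0 : MvPolynomial (Fin n) (ZMod p)) (X j)
      rw [if_pos hjk, h2T, hpoly, integ_neg, integ_natCast_mul, ← hSkdef]
      push_cast
      ring
    · -- j outside the block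
      have hjge : k ≤ (j:ℕ) := hjval j hji0 hjk
      have hE'r : rename (⇑(Equiv.swap i0 j)) E' = E' := by
        apply rename_prod_X
        intro l hl
        rw [hEsetdef, Finset.mem_erase, Finset.mem_filter] at hl
        have hl1 : l ≠ i0 := hl.1
        have hl2 : l ≠ j := fun he => by rw [he] at hl; omega
        exact Equiv.swap_apply_of_ne_of_ne hl1 hl2
      have hrenT : rename (⇑(Equiv.swap i0 j)) (T j)
          = ((2*c : ℕ) : MvPolynomial (Fin n) (ZMod p)) *
            ((X j - X j^2) * (X j - X i0)^(2*c-1) * (Ahat p c i0 j * (E' * B))) := by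
        rw [hTapp]
        simp only [map_mul, map_sub, map_pow, map_natCast, map_one, rename_X, hσi0, hσj,
          hAh, hBr, hE'r]
      have h2T : 2 * integ p n (T j) = integ p n (T j + rename (⇑(Equiv.swap i0 j)) (T j)) := by
        rw [integ_add, hren]
        ring
      have hpoly : T j + rename (⇑(Equiv.swap i0 j)) (T j)
          = ((2*c : ℕ) : MvPolynomial (Fin n) (ZMod p)) *
            ((E' * (A * B)) - (X i0 * E') * (A * B) - X j * (E' * (A * B))) := by
        rw [hrenT, hTapp, ← hfq]
        linear_combination (Ahat p c i0 j * (E' * B)) *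
          sc1 c (X i0 : MvPolynomial (Fin n) (ZMod p)) (X j)
      have hXj : integ p n (X j * (E' * (A * B))) = Sk := by
        have hswap : rename (⇑(Equiv.swap i0 j)) (X j * (E' * (A * B)))
            = (X i0 * E') * (A * B) := by
          simp only [map_mul, rename_X, hσj, hE'r, hAr, hBr]
          ring
        rw [← integ_rename (Equiv.swap i0 j), hswap, hSkdef]
      rw [if_neg hjk, h2T, hpoly, integ_natCast_mul, integ_sub, integ_sub, hXj, ← hSkdef, ← hSk'def]
      push_cast
      ring
  -- summing over j
  have hc1 : ((Finset.univ.erase i0).filter fun j : Fin n => (j:ℕ) < k-1).card = k - 1 := by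
    have hset : ((Finset.univ.erase i0).filter fun j : Fin n => (j:ℕ) < k-1) = Finset.Iio i0 := by
      ext x
      rw [Finset.mem_filter, Finset.mem_erase, Finset.mem_Iio]
      constructor
      · intro hx
        rw [Fin.lt_def, hi0val]
        exact hx.2
      · intro hx
        rw [Fin.lt_def, hi0val] at hx
        refine ⟨⟨fun he => ?_, Finset.mem_univ _⟩, hx⟩
        rw [he, hi0val] at hx
        omega
    rw [hset, Fin.card_Iio, hi0val]
  have hc2 : ((Finset.univ.erase i0).filter fun j : Fin n => ¬ (j:ℕ) < k-1).card = n - k := by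
    have htot := Finset.card_filter_add_card_filter_not
      (s := Finset.univ.erase i0) (p := fun j : Fin n => (j:ℕ) < k-1)
    have hcard : (Finset.univ.erase i0).card = n - 1 := by
      rw [Finset.card_erase_of_mem (Finset.mem_univ _), Finset.card_univ, Fintype.card_fin]
    omega
  have hsum : ∑ j ∈ Finset.univ.erase i0, (2 * integ p n (T j)) =
      ((k-1 : ℕ) : ZMod p) * (-(2*(c:ZMod p) * Sk)) + ((n-k : ℕ) : ZMod p) * (2*(c:ZMod p) * (Sk' - 2*Sk)) := by
    rw [Finset.sum_congr rfl hTj, Finset.sum_ite, Finset.sum_const, Finset.sum_const, hc1, hc2,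
      nsmul_eq_mul, nsmul_eq_mul]
  rw [← Finset.mul_sum] at hsum
  -- final algebra
  apply mul_left_cancel₀ h2ne
  have hnat1 : a + b + (2*n-k-1)*c + 2 = (2+a+b) + ((k-1)*c + 2*((n-k)*c)) := by
    have hx : 2*n-k-1 = (k-1)+2*(n-k) := by omega
    rw [hx]
    ring
  have hnat2 : a + (n-k)*c + 1 = (1+a) + (n-k)*c := by ring
  rw [hnat1, hnat2]
  rw [hA2] at hI0
  push_cast [Nat.cast_add, Nat.cast_mul] at hI0 hcomb hsum ⊢
  linear_combination 2 * hcomb + 2 * hI0 + hsum
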